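/- Let φ be the merging of positive maps φ₁, φ₂ by means of B_i, C_i, ω_i, and suppose φ is a positive map. Define ψ_i(X) = B_i X B_i* and χ_i(X) = C_i Xᵀ C_i* for X ∈ B(K_i). Then for i = 1,2: (1) φ_i − (ψ_i + χ_i) is a positive map; and (2) the range of B_i and the range of C_i are both contained in the range of φ_i(1). -/

import Mathlib

open scoped ComplexOrder
open Matrix

noncomputable section
namespace Paper

/-- A map between matrix algebras is positive if it sends positive semidefinite
matrices to positive semidefinite matrices. -/
def IsPosMap {m n : Type*} [Fintype m] [Fintype n]
    (φ : Matrix m m ℂ → Matrix n n ℂ) : Prop :=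
  ∀ X : Matrix m m ℂ, X.PosSemidef → (φ X).PosSemidef

/-- The rank one operator `ηη*`, i.e. `ζ ↦ ⟨η, ζ⟩ η`. -/
def rankOne {m : Type*} (η : m → ℂ) : Matrix m m ℂ :=
  Matrix.vecMulVec η (star η)

/-- The Choi matrix `∑ E_{ij} ⊗ φ(E_{ij})` of a map `φ`. -/
def choi {m n : Type*} [Fintype m] [DecidableEq m]
    (φ : Matrix m m ℂ → Matrix n n ℂ) : Matrix (m × n) (m × n) ℂ :=
  Matrix.of fun p q => φ (Matrix.single p.1 q.1 1) p.2 q.2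

/-- A map is completely positive iff its Choi matrix is positive semidefinite. -/
def IsCP {m n : Type*} [Fintype m] [DecidableEq m] [Fintype n]
    (φ : Matrix m m ℂ → Matrix n n ℂ) : Prop :=
  (choi φ).PosSemidef

/-- A map is completely copositive iff `X ↦ φ(Xᵀ)` is completely positive. -/
def IsCCP {m n : Type*} [Fintype m] [DecidableEq m] [Fintype n]
    (φ : Matrix m m ℂ → Matrix n n ℂ) : Prop :=
  IsCP fun X => φ Xᵀ

/-- A map is decomposable iff it is the sum of a completely positive and a
completely copositive (linear) map. -/
def Decomposable {m n : Type*} [Fintype m] [DecidableEq m] [Fintype n]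
    (φ : Matrix m m ℂ → Matrix n n ℂ) : Prop :=
  ∃ φ₁ φ₂ : Matrix m m ℂ →ₗ[ℂ] Matrix n n ℂ,
    IsCP (⇑φ₁) ∧ IsCCP (⇑φ₂) ∧ ∀ X, φ X = φ₁ X + φ₂ X

/-- The ampliation `id_{M₂(ℂ)} ⊗ φ`. -/
def ampl2 {m n : Type*} (φ : Matrix m m ℂ → Matrix n n ℂ)
    (Y : Matrix (Fin 2 × m) (Fin 2 × m) ℂ) : Matrix (Fin 2 × n) (Fin 2 × n) ℂ :=
  Matrix.of fun p q => φ (Matrix.of fun a b => Y (p.1, a) (q.1, b)) p.2 q.2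

/-- The ampliation `tran_{M₂(ℂ)} ⊗ φ`. -/
def ampl2T {m n : Type*} (φ : Matrix m m ℂ → Matrix n n ℂ)
    (Y : Matrix (Fin 2 × m) (Fin 2 × m) ℂ) : Matrix (Fin 2 × n) (Fin 2 × n) ℂ :=
  Matrix.of fun p q => φ (Matrix.of fun a b => Y (q.1, a) (p.1, b)) p.2 q.2

/-- `φ` is 2-positive if `id_{M₂(ℂ)} ⊗ φ` is positive. -/
def Is2Pos {m n : Type*} [Fintype m] [Fintype n]
    (φ : Matrix m m ℂ → Matrix n n ℂ) : Prop :=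
  IsPosMap (ampl2 φ)

/-- `φ` is 2-copositive if `tran_{M₂(ℂ)} ⊗ φ` is positive. -/
def Is2Copos {m n : Type*} [Fintype m] [Fintype n]
    (φ : Matrix m m ℂ → Matrix n n ℂ) : Prop :=
  IsPosMap (ampl2T φ)

/-- A positive map `φ` is exposed if every positive (linear) map `ψ` vanishing
(in the sense `⟨y, ψ(ηη*) y⟩ = 0`) wherever `φ` vanishes is a nonnegative
multiple of `φ`. -/
def IsExposed {m n : Type*} [Fintype m] [Fintype n]
    (φ : Matrix m m ℂ → Matrix n n ℂ) : Prop :=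
  IsPosMap φ ∧
    ∀ ψ : Matrix m m ℂ →ₗ[ℂ] Matrix n n ℂ, IsPosMap ⇑ψ →
      (∀ (η : m → ℂ) (y : n → ℂ),
        star y ⬝ᵥ (φ (rankOne η)).mulVec y = 0 →
          star y ⬝ᵥ (ψ (rankOne η)).mulVec y = 0) →
      ∃ c : ℝ, 0 ≤ c ∧ ∀ X, ψ X = (c : ℂ) • φ X

/-- A positive map `φ` is optimal if there is no nonzero completely positive map
`ψ` with `φ − ψ` positive. -/
def IsOptimal {m n : Type*} [Fintype m] [DecidableEq m] [Fintype n]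
    (φ : Matrix m m ℂ → Matrix n n ℂ) : Prop :=
  ¬∃ ψ : Matrix m m ℂ →ₗ[ℂ] Matrix n n ℂ,
      ψ ≠ 0 ∧ IsCP (⇑ψ) ∧ IsPosMap fun X => φ X - ψ X

/-- The index type of the direct sum `ℂᵃ ⊕ ℂᵇ ⊕ ℂ`. -/
abbrev TI (a b : ℕ) := Fin a ⊕ (Fin b ⊕ Unit)

/-- The index of the distinguished one-dimensional summand. -/
def tidx {a b : ℕ} : TI a b := Sum.inr (Sum.inr ())

/-- Block `X₁₁` of a matrix on `ℂᵃ ⊕ ℂᵇ ⊕ ℂ`. -/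
def blk11 {a b : ℕ} (X : Matrix (TI a b) (TI a b) ℂ) : Matrix (Fin a) (Fin a) ℂ :=
  Matrix.of fun i j => X (Sum.inl i) (Sum.inl j)

/-- Block `X₂₂`. -/
def blk22 {a b : ℕ} (X : Matrix (TI a b) (TI a b) ℂ) : Matrix (Fin b) (Fin b) ℂ :=
  Matrix.of fun i j => X (Sum.inr (Sum.inl i)) (Sum.inr (Sum.inl j))

/-- Block `X₁₃`, viewed as a column vector. -/
def blk13 {a b : ℕ} (X : Matrix (TI a b) (TI a b) ℂ) : Fin a → ℂ :=
  fun i => X (Sum.inl i) tidx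

/-- Block `X₃₁` (equivalently, the vector `X₃₁ᵀ`). -/
def blk31 {a b : ℕ} (X : Matrix (TI a b) (TI a b) ℂ) : Fin a → ℂ :=
  fun i => X tidx (Sum.inl i)

/-- Block `X₂₃`, viewed as a column vector. -/
def blk23 {a b : ℕ} (X : Matrix (TI a b) (TI a b) ℂ) : Fin b → ℂ :=
  fun i => X (Sum.inr (Sum.inl i)) tidx

/-- Block `X₃₂` (equivalently, the vector `X₃₂ᵀ`). -/
def blk32 {a b : ℕ} (X : Matrix (TI a b) (TI a b) ℂ) : Fin b → ℂ :=
  fun i => X tidx (Sum.inr (Sum.inl i))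

/-- `P` is the orthogonal projection onto the range of `A`: it is Hermitian,
idempotent, and has the same range as `A`. -/
def IsOrthProjOnRange {n m : Type*} [Fintype n] [Fintype m]
    (P : Matrix n n ℂ) (A : Matrix n m ℂ) : Prop :=
  P.IsHermitian ∧ P * P = P ∧
    LinearMap.range P.mulVecLin = LinearMap.range A.mulVecLin

/-- The merging of the maps `φ₁`, `φ₂` by means of the operators `B₁, C₁, B₂, C₂`,
the functionals `ω₁, ω₂`, with `P₁, P₂` the orthogonal projections onto the ranges
of `φ₁(1)`, `φ₂(1)`. -/
def merging {k₁ k₂ h₁ h₂ : ℕ}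
    (φ₁ : Matrix (Fin k₁) (Fin k₁) ℂ →ₗ[ℂ] Matrix (Fin h₁) (Fin h₁) ℂ)
    (φ₂ : Matrix (Fin k₂) (Fin k₂) ℂ →ₗ[ℂ] Matrix (Fin h₂) (Fin h₂) ℂ)
    (B₁ C₁ : Matrix (Fin h₁) (Fin k₁) ℂ) (B₂ C₂ : Matrix (Fin h₂) (Fin k₂) ℂ)
    (ω₁ : Matrix (Fin k₁) (Fin k₁) ℂ →ₗ[ℂ] ℂ) (ω₂ : Matrix (Fin k₂) (Fin k₂) ℂ →ₗ[ℂ] ℂ)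
    (P₁ : Matrix (Fin h₁) (Fin h₁) ℂ) (P₂ : Matrix (Fin h₂) (Fin h₂) ℂ)
    (X : Matrix (TI k₁ k₂) (TI k₁ k₂) ℂ) : Matrix (TI h₁ h₂) (TI h₁ h₂) ℂ :=
  Matrix.of fun p q =>
    match p, q with
    | Sum.inl a, Sum.inl b => φ₁ (blk11 X) a b + ω₂ (blk22 X) * P₁ a b
    | Sum.inl _, Sum.inr (Sum.inl _) => 0
    | Sum.inl a, Sum.inr (Sum.inr _) => (B₁.mulVec (blk13 X) + C₁.mulVec (blk31 X)) a
    | Sum.inr (Sum.inl _), Sum.inl _ => 0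
    | Sum.inr (Sum.inl a), Sum.inr (Sum.inl b) => φ₂ (blk22 X) a b + ω₁ (blk11 X) * P₂ a b
    | Sum.inr (Sum.inl a), Sum.inr (Sum.inr _) => (B₂.mulVec (blk23 X) + C₂.mulVec (blk32 X)) a
    | Sum.inr (Sum.inr _), Sum.inl b =>
        (Matrix.vecMul (blk31 X) B₁ᴴ + Matrix.vecMul (blk13 X) C₁ᴴ) b
    | Sum.inr (Sum.inr _), Sum.inr (Sum.inl b) =>
        (Matrix.vecMul (blk32 X) B₂ᴴ + Matrix.vecMul (blk23 X) C₂ᴴ) b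
    | Sum.inr (Sum.inr _), Sum.inr (Sum.inr _) => X tidx tidx

/-- The quantity `μᵢ(η, y) = √⟨y, φᵢ(ηη*) y⟩`. -/
def muQ {k h : ℕ} (φ : Matrix (Fin k) (Fin k) ℂ →ₗ[ℂ] Matrix (Fin h) (Fin h) ℂ)
    (η : Fin k → ℂ) (y : Fin h → ℂ) : ℝ :=
  Real.sqrt (star y ⬝ᵥ (φ (rankOne η)).mulVec y).re

/-- The quantity `εᵢ(η, y) = |⟨y, Bη⟩| + |⟨y, C η̄⟩|`. -/
def epsQ {k h : ℕ} (B C : Matrix (Fin h) (Fin k) ℂ) (η : Fin k → ℂ) (y : Fin h → ℂ) : ℝ :=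
  ‖star y ⬝ᵥ B.mulVec η‖ + ‖star y ⬝ᵥ C.mulVec (star η)‖

/-- The quantity `δᵢ(η, y) = √(μᵢ(η,y)² − εᵢ(η,y)²)`. -/
def deltaQ {k h : ℕ} (φ : Matrix (Fin k) (Fin k) ℂ →ₗ[ℂ] Matrix (Fin h) (Fin h) ℂ)
    (B C : Matrix (Fin h) (Fin k) ℂ) (η : Fin k → ℂ) (y : Fin h → ℂ) : ℝ :=
  Real.sqrt (muQ φ η y ^ 2 - epsQ B C η y ^ 2)

/-- The quantity `σᵢ(η, y) = √(ωᵢ(ηη*))·‖P y‖`. -/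
def sigmaQ {k h : ℕ} (ω : Matrix (Fin k) (Fin k) ℂ →ₗ[ℂ] ℂ)
    (P : Matrix (Fin h) (Fin h) ℂ) (η : Fin k → ℂ) (y : Fin h → ℂ) : ℝ :=
  Real.sqrt (ω (rankOne η)).re * Real.sqrt (star (P.mulVec y) ⬝ᵥ P.mulVec y).re

section AuxLemmas

variable {m n : Type*} [Fintype m] [Fintype n]

omit [Fintype m] in
lemma rankOne_apply' (η : m → ℂ) (i j : m) :
    rankOne η i j = η i * (starRingEnd ℂ) (η j) := rfl

lemma quadform_rankOne (η y : m → ℂ) :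
    star y ⬝ᵥ (rankOne η) *ᵥ y = (star y ⬝ᵥ η) * (starRingEnd ℂ) (star y ⬝ᵥ η) := by
  simp only [dotProduct, mulVec, rankOne, vecMulVec, of_apply, Pi.star_apply, map_sum,
    _root_.map_mul, Finset.mul_sum, Finset.sum_mul, RingHom.id_apply]
  rw [Finset.sum_comm]
  refine Finset.sum_congr rfl fun j _ => Finset.sum_congr rfl fun i _ => ?_
  simp [RCLike.star_def, Complex.conj_conj]
  ring

lemma rankOne_posSemidef (η : m → ℂ) : (rankOne η).PosSemidef := by
  rw [Matrix.posSemidef_iff_dotProduct_mulVec]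
  constructor
  · ext i j
    simp [rankOne, conjTranspose_apply, vecMulVec, mul_comm, RCLike.star_def]
  · intro x
    rw [quadform_rankOne, Complex.mul_conj]
    exact Complex.zero_le_real.2 (Complex.normSq_nonneg _)

omit [Fintype m] in
lemma transpose_rankOne (η : m → ℂ) : (rankOne η)ᵀ = rankOne (star η) := by
  ext i j
  simp [rankOne, vecMulVec, RCLike.star_def, mul_comm]

lemma mul_rankOne_conjTranspose (B : Matrix n m ℂ) (η : m → ℂ) :
    B * rankOne η * Bᴴ = rankOne (B *ᵥ η) := by
  ext i j
  simp only [rankOne, Matrix.mul_apply, vecMulVec, of_apply, Pi.star_apply, mulVec,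
    conjTranspose_apply, RCLike.star_def, dotProduct]
  simp only [map_sum, _root_.map_mul, Finset.mul_sum, Finset.sum_mul]
  refine Finset.sum_congr rfl fun a _ => Finset.sum_congr rfl fun b _ => ?_
  ring

lemma posSemidef_sum {ι : Type*} (s : Finset ι) (f : ι → Matrix m m ℂ)
    (h : ∀ i ∈ s, (f i).PosSemidef) : (∑ i ∈ s, f i).PosSemidef :=
  Finset.sum_induction f _ (fun _ _ ha hb => ha.add hb) Matrix.PosSemidef.zero h

open scoped MatrixOrder in
lemma posSemidef_eq_sum_rankOne [DecidableEq m] {X : Matrix m m ℂ} (hX : X.PosSemidef) :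
    ∃ v : m → m → ℂ, X = ∑ j : m, rankOne (v j) := by
  refine ⟨fun j i => CFC.sqrt X i j, ?_⟩
  have h := CFC.sqrt_mul_sqrt_self X hX.nonneg
  have hh : (CFC.sqrt X).IsHermitian := (CFC.sqrt_nonneg X).posSemidef.1
  ext i k
  have : X i k = (CFC.sqrt X * CFC.sqrt X) i k := by rw [h]
  rw [this]
  simp only [Matrix.mul_apply, Matrix.sum_apply, rankOne, vecMulVec, of_apply, Pi.star_apply,
    RCLike.star_def]
  refine Finset.sum_congr rfl fun j _ => ?_
  rw [← hh.apply j k]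
  simp [RCLike.star_def]

omit [Fintype m] [Fintype n] in
lemma nonneg_complex_iff {z : ℂ} : 0 ≤ z ↔ 0 ≤ z.re ∧ z.im = 0 := by
  rw [Complex.le_def]
  simp [eq_comm]

lemma star_dotProduct_comm (x η : m → ℂ) : star x ⬝ᵥ η = (starRingEnd ℂ) (star η ⬝ᵥ x) := by
  simp only [dotProduct, map_sum, _root_.map_mul, Pi.star_apply, RCLike.star_def, Complex.conj_conj]
  exact Finset.sum_congr rfl fun i _ => mul_comm _ _

lemma dotProduct_star_self_real (η : m → ℂ) :
    star η ⬝ᵥ η = ((∑ i, Complex.normSq (η i) : ℝ) : ℂ) := by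
  push_cast
  simp only [dotProduct, Pi.star_apply, RCLike.star_def]
  exact Finset.sum_congr rfl fun i _ => by rw [Complex.normSq_eq_conj_mul_self]

lemma cs_quad (η x : m → ℂ) :
    Complex.normSq (star x ⬝ᵥ η) ≤ (∑ i, Complex.normSq (η i)) * (∑ i, Complex.normSq (x i)) := by
  have cs := inner_mul_inner_self_le (𝕜 := ℂ)
    ((WithLp.equiv 2 (m → ℂ)).symm η) ((WithLp.equiv 2 (m → ℂ)).symm x)
  simp only [EuclideanSpace.inner_eq_star_dotProduct, Equiv.apply_symm_apply] at cs
  simp only [WithLp.equiv_symm_apply, WithLp.ofLp_toLp] at cs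
  rw [dotProduct_comm x (star η), dotProduct_comm η (star x), dotProduct_comm η (star η),
    dotProduct_comm x (star x)] at cs
  rw [star_dotProduct_comm x η, Complex.normSq_conj]
  rw [star_dotProduct_comm x η, RCLike.norm_conj] at cs
  rw [dotProduct_star_self_real η, dotProduct_star_self_real x] at cs
  simp only [RCLike.re_to_complex, Complex.ofReal_re] at cs
  calc Complex.normSq (star η ⬝ᵥ x) = ‖star η ⬝ᵥ x‖ * ‖star η ⬝ᵥ x‖ := by
        rw [Complex.normSq_eq_norm_sq, sq]
    _ ≤ _ := cs

lemma cs_posSemidef [DecidableEq m] (η : m → ℂ) :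
    ((star η ⬝ᵥ η) • (1 : Matrix m m ℂ) - rankOne η).PosSemidef := by
  rw [Matrix.posSemidef_iff_dotProduct_mulVec]
  constructor
  · have h1 : ((star η ⬝ᵥ η) • (1 : Matrix m m ℂ)).IsHermitian := by
      rw [Matrix.IsHermitian, conjTranspose_smul, conjTranspose_one, dotProduct_star_self_real]
      simp
    exact h1.sub (rankOne_posSemidef η).1
  · intro x
    rw [sub_mulVec, dotProduct_sub, smul_mulVec, one_mulVec, dotProduct_smul,
      quadform_rankOne, Complex.mul_conj]
    rw [dotProduct_star_self_real η, smul_eq_mul, dotProduct_star_self_real x]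
    have : ((∑ i, Complex.normSq (η i) : ℝ) : ℂ) * ((∑ i, Complex.normSq (x i) : ℝ) : ℂ)
        - (Complex.normSq (star x ⬝ᵥ η) : ℂ)
        = (((∑ i, Complex.normSq (η i)) * (∑ i, Complex.normSq (x i))
            - Complex.normSq (star x ⬝ᵥ η) : ℝ) : ℂ) := by push_cast; ring
    rw [this]
    exact Complex.zero_le_real.2 (by have := cs_quad η x; linarith)

lemma quad_eq_zero {k h : ℕ} (φ : Matrix (Fin k) (Fin k) ℂ →ₗ[ℂ] Matrix (Fin h) (Fin h) ℂ)
    (hφ : IsPosMap ⇑φ) (η : Fin k → ℂ) {y : Fin h → ℂ} (hy : (φ 1) *ᵥ y = 0) :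
    star y ⬝ᵥ (φ (rankOne η)) *ᵥ y = 0 := by
  have h1 : (0:ℂ) ≤ star y ⬝ᵥ (φ (rankOne η)) *ᵥ y := (hφ _ (rankOne_posSemidef η)).dotProduct_mulVec_nonneg y
  have h2 := (hφ _ (cs_posSemidef η)).dotProduct_mulVec_nonneg y
  rw [map_sub, LinearMap.map_smul, sub_mulVec, dotProduct_sub, smul_mulVec, hy, smul_zero,
    dotProduct_zero, zero_sub] at h2
  exact le_antisymm (neg_nonneg.mp h2) h1

end AuxLemmas

section MergingSide1

variable {k₁ k₂ h₁ h₂ : ℕ}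

lemma blk11_xi1 (η : Fin k₁ → ℂ) (t : ℂ) :
    blk11 (rankOne (Sum.elim η (Sum.elim (0 : Fin k₂ → ℂ) fun _ => t) : TI k₁ k₂ → ℂ)) = rankOne η := by
  ext i j; simp [blk11, rankOne, vecMulVec]

lemma blk22_xi1 (η : Fin k₁ → ℂ) (t : ℂ) :
    blk22 (rankOne (Sum.elim η (Sum.elim (0 : Fin k₂ → ℂ) fun _ => t) : TI k₁ k₂ → ℂ)) = 0 := by
  ext i j; simp [blk22, rankOne, vecMulVec]

lemma blk13_xi1 (η : Fin k₁ → ℂ) (t : ℂ) :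
    blk13 (rankOne (Sum.elim η (Sum.elim (0 : Fin k₂ → ℂ) fun _ => t) : TI k₁ k₂ → ℂ))
      = (starRingEnd ℂ) t • η := by
  ext i; simp [blk13, rankOne, vecMulVec, tidx, RCLike.star_def, mul_comm]

lemma blk31_xi1 (η : Fin k₁ → ℂ) (t : ℂ) :
    blk31 (rankOne (Sum.elim η (Sum.elim (0 : Fin k₂ → ℂ) fun _ => t) : TI k₁ k₂ → ℂ))
      = t • star η := by
  ext i; simp [blk31, rankOne, vecMulVec, tidx, RCLike.star_def]

lemma tt_xi1 (η : Fin k₁ → ℂ) (t : ℂ) :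
    (rankOne (Sum.elim η (Sum.elim (0 : Fin k₂ → ℂ) fun _ => t) : TI k₁ k₂ → ℂ)) (Sum.inr (Sum.inr ())) (Sum.inr (Sum.inr ()))
      = t * (starRingEnd ℂ) t := by
  simp [rankOne, vecMulVec, tidx, RCLike.star_def]

variable (φ₁ : Matrix (Fin k₁) (Fin k₁) ℂ →ₗ[ℂ] Matrix (Fin h₁) (Fin h₁) ℂ)
  (φ₂ : Matrix (Fin k₂) (Fin k₂) ℂ →ₗ[ℂ] Matrix (Fin h₂) (Fin h₂) ℂ)
  (B₁ C₁ : Matrix (Fin h₁) (Fin k₁) ℂ) (B₂ C₂ : Matrix (Fin h₂) (Fin k₂) ℂ)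
  (ω₁ : Matrix (Fin k₁) (Fin k₁) ℂ →ₗ[ℂ] ℂ) (ω₂ : Matrix (Fin k₂) (Fin k₂) ℂ →ₗ[ℂ] ℂ)
  (P₁ : Matrix (Fin h₁) (Fin h₁) ℂ) (P₂ : Matrix (Fin h₂) (Fin h₂) ℂ)

lemma merging_quad1 (η : Fin k₁ → ℂ) (y : Fin h₁ → ℂ) (t z : ℂ) :
    star (Sum.elim y (Sum.elim 0 fun _ => z) : TI h₁ h₂ → ℂ) ⬝ᵥ
        merging φ₁ φ₂ B₁ C₁ B₂ C₂ ω₁ ω₂ P₁ P₂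
          (rankOne (Sum.elim η (Sum.elim 0 fun _ => t))) *ᵥ
        (Sum.elim y (Sum.elim 0 fun _ => z))
      = star y ⬝ᵥ (φ₁ (rankOne η)) *ᵥ y
        + ((starRingEnd ℂ) t * (star y ⬝ᵥ B₁ *ᵥ η) + t * (star y ⬝ᵥ C₁ *ᵥ star η)) * z
        + (starRingEnd ℂ) (((starRingEnd ℂ) t * (star y ⬝ᵥ B₁ *ᵥ η)
            + t * (star y ⬝ᵥ C₁ *ᵥ star η)) * z)
        + (z * (starRingEnd ℂ) z) * (t * (starRingEnd ℂ) t) := by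
  simp only [dotProduct, mulVec, Fintype.sum_sum_type, merging, of_apply, Sum.elim_inl,
    Sum.elim_inr, Pi.star_apply, Pi.zero_apply, star_zero, zero_mul, mul_zero,
    Finset.sum_const_zero, add_zero, zero_add, blk11_xi1, blk22_xi1, blk13_xi1, blk31_xi1,
    tt_xi1, map_zero, Finset.univ_unique, Finset.sum_singleton, tidx,
    vecMul, conjTranspose_apply, dotProduct,
    RCLike.star_def, map_sum, _root_.map_mul, _root_.map_add,
    Pi.add_apply, Pi.smul_apply, smul_eq_mul, Complex.conj_conj,
    Finset.mul_sum, Finset.sum_mul, mul_add, add_mul, Finset.sum_add_distrib]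
  ring_nf
  simp only [mul_comm, mul_left_comm, mul_assoc]
  ring_nf

lemma key1 (hpos : IsPosMap (merging φ₁ φ₂ B₁ C₁ B₂ C₂ ω₁ ω₂ P₁ P₂)) (η : Fin k₁ → ℂ)
    (y : Fin h₁ → ℂ) :
    Complex.normSq (star y ⬝ᵥ B₁ *ᵥ η) + Complex.normSq (star y ⬝ᵥ C₁ *ᵥ star η)
      ≤ (star y ⬝ᵥ (φ₁ (rankOne η)) *ᵥ y).re := by
  set a := star y ⬝ᵥ B₁ *ᵥ η with ha
  set b := star y ⬝ᵥ C₁ *ᵥ star η with hb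
  have main : ∀ t : ℂ, t * (starRingEnd ℂ) t = 1 →
      Complex.normSq ((starRingEnd ℂ) t * a + t * b)
        ≤ (star y ⬝ᵥ (φ₁ (rankOne η)) *ᵥ y).re := by
    intro t ht
    set u := (starRingEnd ℂ) t * a + t * b with hu
    have hM := hpos _ (rankOne_posSemidef (Sum.elim η (Sum.elim 0 fun _ => t)))
    have h0 := hM.dotProduct_mulVec_nonneg (Sum.elim y (Sum.elim 0 fun _ => -(starRingEnd ℂ) u))
    rw [merging_quad1 φ₁ φ₂ B₁ C₁ B₂ C₂ ω₁ ω₂ P₁ P₂ η y t (-(starRingEnd ℂ) u)] at h0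
    rw [← hu, ht, mul_one] at h0
    have e1 : u * -(starRingEnd ℂ) u = -(Complex.normSq u : ℂ) := by
      rw [mul_neg, Complex.mul_conj]
    have e2 : (starRingEnd ℂ) (u * -(starRingEnd ℂ) u) = -(Complex.normSq u : ℂ) := by
      rw [e1, map_neg, Complex.conj_ofReal]
    have e3 : (-(starRingEnd ℂ) u) * (starRingEnd ℂ) (-(starRingEnd ℂ) u)
        = (Complex.normSq u : ℂ) := by
      rw [map_neg, neg_mul_neg, Complex.conj_conj, ← Complex.normSq_eq_conj_mul_self]
    rw [e2, e1, e3] at h0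
    have h0' : (0:ℂ) ≤ star y ⬝ᵥ (φ₁ (rankOne η)) *ᵥ y - (Complex.normSq u : ℂ) := by
      convert h0 using 1; ring
    rw [nonneg_complex_iff] at h0'
    have := h0'.1
    simp only [Complex.sub_re, Complex.ofReal_re] at this
    linarith
  have h1 := main 1 (by simp)
  have hI := main Complex.I (by rw [Complex.conj_I, mul_neg, Complex.I_mul_I, neg_neg])
  have hiden : Complex.normSq ((starRingEnd ℂ) 1 * a + 1 * b)
      + Complex.normSq ((starRingEnd ℂ) Complex.I * a + Complex.I * b)
      = 2 * (Complex.normSq a + Complex.normSq b) := by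
    simp only [Complex.normSq_apply, Complex.conj_I, Complex.mul_re, Complex.mul_im,
      Complex.add_re, Complex.add_im, Complex.I_re, Complex.I_im, Complex.neg_re,
      Complex.neg_im, _root_.map_one, Complex.one_re, Complex.one_im]
    ring
  linarith

lemma F1_psd_rankOne (hφ₁ : IsPosMap ⇑φ₁)
    (hpos : IsPosMap (merging φ₁ φ₂ B₁ C₁ B₂ C₂ ω₁ ω₂ P₁ P₂)) (η : Fin k₁ → ℂ) :
    (φ₁ (rankOne η) - (B₁ * rankOne η * B₁ᴴ + C₁ * (rankOne η)ᵀ * C₁ᴴ)).PosSemidef := by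
  rw [transpose_rankOne, mul_rankOne_conjTranspose, mul_rankOne_conjTranspose]
  rw [Matrix.posSemidef_iff_dotProduct_mulVec]
  constructor
  · exact ((hφ₁ _ (rankOne_posSemidef η)).1).sub
      ((rankOne_posSemidef _).1.add (rankOne_posSemidef _).1)
  · intro x
    rw [sub_mulVec, add_mulVec, dotProduct_sub, dotProduct_add, quadform_rankOne,
      quadform_rankOne, Complex.mul_conj, Complex.mul_conj]
    have hk := key1 φ₁ φ₂ B₁ C₁ B₂ C₂ ω₁ ω₂ P₁ P₂ hpos η x
    have hm0 : (0:ℂ) ≤ star x ⬝ᵥ (φ₁ (rankOne η)) *ᵥ x := (hφ₁ _ (rankOne_posSemidef η)).dotProduct_mulVec_nonneg x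
    rw [nonneg_complex_iff] at hm0 ⊢
    constructor
    · simp only [Complex.sub_re, Complex.add_re, Complex.ofReal_re]
      linarith
    · simp only [Complex.sub_im, Complex.add_im, Complex.ofReal_im, hm0.2]
      ring

lemma F1_posmap (hφ₁ : IsPosMap ⇑φ₁)
    (hpos : IsPosMap (merging φ₁ φ₂ B₁ C₁ B₂ C₂ ω₁ ω₂ P₁ P₂)) :
    IsPosMap (fun X : Matrix (Fin k₁) (Fin k₁) ℂ =>
      φ₁ X - (B₁ * X * B₁ᴴ + C₁ * Xᵀ * C₁ᴴ)) := by
  intro X hX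
  obtain ⟨v, hv⟩ := posSemidef_eq_sum_rankOne hX
  have hrw : φ₁ X - (B₁ * X * B₁ᴴ + C₁ * Xᵀ * C₁ᴴ)
      = ∑ j, (φ₁ (rankOne (v j))
          - (B₁ * rankOne (v j) * B₁ᴴ + C₁ * (rankOne (v j))ᵀ * C₁ᴴ)) := by
    rw [hv, map_sum, Matrix.transpose_sum, Matrix.mul_sum, Matrix.mul_sum, Matrix.sum_mul,
      Matrix.sum_mul, ← Finset.sum_add_distrib, ← Finset.sum_sub_distrib]
  dsimp only
  rw [hrw]
  exact posSemidef_sum _ _ fun j _ =>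
    F1_psd_rankOne φ₁ φ₂ B₁ C₁ B₂ C₂ ω₁ ω₂ P₁ P₂ hφ₁ hpos (v j)

end MergingSide1

section MergingSide2

variable {k₁ k₂ h₁ h₂ : ℕ}

lemma blk22_xi2 (η : Fin k₂ → ℂ) (t : ℂ) :
    blk22 (rankOne (Sum.elim (0 : Fin k₁ → ℂ) (Sum.elim η fun _ => t) : TI k₁ k₂ → ℂ))
      = rankOne η := by
  ext i j; simp [blk22, rankOne, vecMulVec]

lemma blk11_xi2 (η : Fin k₂ → ℂ) (t : ℂ) :
    blk11 (rankOne (Sum.elim (0 : Fin k₁ → ℂ) (Sum.elim η fun _ => t) : TI k₁ k₂ → ℂ)) = 0 := by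
  ext i j; simp [blk11, rankOne, vecMulVec]

lemma blk23_xi2 (η : Fin k₂ → ℂ) (t : ℂ) :
    blk23 (rankOne (Sum.elim (0 : Fin k₁ → ℂ) (Sum.elim η fun _ => t) : TI k₁ k₂ → ℂ))
      = (starRingEnd ℂ) t • η := by
  ext i; simp [blk23, rankOne, vecMulVec, tidx, RCLike.star_def, mul_comm]

lemma blk32_xi2 (η : Fin k₂ → ℂ) (t : ℂ) :
    blk32 (rankOne (Sum.elim (0 : Fin k₁ → ℂ) (Sum.elim η fun _ => t) : TI k₁ k₂ → ℂ))
      = t • star η := by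
  ext i; simp [blk32, rankOne, vecMulVec, tidx, RCLike.star_def]

lemma tt_xi2 (η : Fin k₂ → ℂ) (t : ℂ) :
    (rankOne (Sum.elim (0 : Fin k₁ → ℂ) (Sum.elim η fun _ => t) : TI k₁ k₂ → ℂ))
        (Sum.inr (Sum.inr ())) (Sum.inr (Sum.inr ()))
      = t * (starRingEnd ℂ) t := by
  simp [rankOne, vecMulVec, tidx, RCLike.star_def]

variable (φ₁ : Matrix (Fin k₁) (Fin k₁) ℂ →ₗ[ℂ] Matrix (Fin h₁) (Fin h₁) ℂ)
  (φ₂ : Matrix (Fin k₂) (Fin k₂) ℂ →ₗ[ℂ] Matrix (Fin h₂) (Fin h₂) ℂ)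
  (B₁ C₁ : Matrix (Fin h₁) (Fin k₁) ℂ) (B₂ C₂ : Matrix (Fin h₂) (Fin k₂) ℂ)
  (ω₁ : Matrix (Fin k₁) (Fin k₁) ℂ →ₗ[ℂ] ℂ) (ω₂ : Matrix (Fin k₂) (Fin k₂) ℂ →ₗ[ℂ] ℂ)
  (P₁ : Matrix (Fin h₁) (Fin h₁) ℂ) (P₂ : Matrix (Fin h₂) (Fin h₂) ℂ)

lemma merging_quad2 (η : Fin k₂ → ℂ) (y : Fin h₂ → ℂ) (t z : ℂ) :
    star (Sum.elim 0 (Sum.elim y fun _ => z) : TI h₁ h₂ → ℂ) ⬝ᵥ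
        merging φ₁ φ₂ B₁ C₁ B₂ C₂ ω₁ ω₂ P₁ P₂
          (rankOne (Sum.elim 0 (Sum.elim η fun _ => t))) *ᵥ
        (Sum.elim 0 (Sum.elim y fun _ => z))
      = star y ⬝ᵥ (φ₂ (rankOne η)) *ᵥ y
        + ((starRingEnd ℂ) t * (star y ⬝ᵥ B₂ *ᵥ η) + t * (star y ⬝ᵥ C₂ *ᵥ star η)) * z
        + (starRingEnd ℂ) (((starRingEnd ℂ) t * (star y ⬝ᵥ B₂ *ᵥ η)
            + t * (star y ⬝ᵥ C₂ *ᵥ star η)) * z)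
        + (z * (starRingEnd ℂ) z) * (t * (starRingEnd ℂ) t) := by
  simp only [dotProduct, mulVec, Fintype.sum_sum_type, merging, of_apply, Sum.elim_inl,
    Sum.elim_inr, Pi.star_apply, Pi.zero_apply, star_zero, zero_mul, mul_zero,
    Finset.sum_const_zero, add_zero, zero_add, blk22_xi2, blk11_xi2, blk23_xi2, blk32_xi2,
    tt_xi2, map_zero, Finset.univ_unique, Finset.sum_singleton, tidx,
    vecMul, conjTranspose_apply, dotProduct,
    RCLike.star_def, map_sum, _root_.map_mul, _root_.map_add,
    Pi.add_apply, Pi.smul_apply, smul_eq_mul, Complex.conj_conj,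
    Finset.mul_sum, Finset.sum_mul, mul_add, add_mul, Finset.sum_add_distrib]
  ring_nf
  simp only [mul_comm, mul_left_comm, mul_assoc]
  ring_nf

lemma key2 (hpos : IsPosMap (merging φ₁ φ₂ B₁ C₁ B₂ C₂ ω₁ ω₂ P₁ P₂)) (η : Fin k₂ → ℂ)
    (y : Fin h₂ → ℂ) :
    Complex.normSq (star y ⬝ᵥ B₂ *ᵥ η) + Complex.normSq (star y ⬝ᵥ C₂ *ᵥ star η)
      ≤ (star y ⬝ᵥ (φ₂ (rankOne η)) *ᵥ y).re := by
  set a := star y ⬝ᵥ B₂ *ᵥ η with ha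
  set b := star y ⬝ᵥ C₂ *ᵥ star η with hb
  have main : ∀ t : ℂ, t * (starRingEnd ℂ) t = 1 →
      Complex.normSq ((starRingEnd ℂ) t * a + t * b)
        ≤ (star y ⬝ᵥ (φ₂ (rankOne η)) *ᵥ y).re := by
    intro t ht
    set u := (starRingEnd ℂ) t * a + t * b with hu
    have hM := hpos _ (rankOne_posSemidef (Sum.elim 0 (Sum.elim η fun _ => t)))
    have h0 := hM.dotProduct_mulVec_nonneg (Sum.elim 0 (Sum.elim y fun _ => -(starRingEnd ℂ) u))
    rw [merging_quad2 φ₁ φ₂ B₁ C₁ B₂ C₂ ω₁ ω₂ P₁ P₂ η y t (-(starRingEnd ℂ) u)] at h0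
    rw [← hu, ht, mul_one] at h0
    have e1 : u * -(starRingEnd ℂ) u = -(Complex.normSq u : ℂ) := by
      rw [mul_neg, Complex.mul_conj]
    have e2 : (starRingEnd ℂ) (u * -(starRingEnd ℂ) u) = -(Complex.normSq u : ℂ) := by
      rw [e1, map_neg, Complex.conj_ofReal]
    have e3 : (-(starRingEnd ℂ) u) * (starRingEnd ℂ) (-(starRingEnd ℂ) u)
        = (Complex.normSq u : ℂ) := by
      rw [map_neg, neg_mul_neg, Complex.conj_conj, ← Complex.normSq_eq_conj_mul_self]
    rw [e2, e1, e3] at h0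
    have h0' : (0:ℂ) ≤ star y ⬝ᵥ (φ₂ (rankOne η)) *ᵥ y - (Complex.normSq u : ℂ) := by
      convert h0 using 1; ring
    rw [nonneg_complex_iff] at h0'
    have := h0'.1
    simp only [Complex.sub_re, Complex.ofReal_re] at this
    linarith
  have h1 := main 1 (by simp)
  have hI := main Complex.I (by rw [Complex.conj_I, mul_neg, Complex.I_mul_I, neg_neg])
  have hiden : Complex.normSq ((starRingEnd ℂ) 1 * a + 1 * b)
      + Complex.normSq ((starRingEnd ℂ) Complex.I * a + Complex.I * b)
      = 2 * (Complex.normSq a + Complex.normSq b) := by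
    simp only [Complex.normSq_apply, Complex.conj_I, Complex.mul_re, Complex.mul_im,
      Complex.add_re, Complex.add_im, Complex.I_re, Complex.I_im, Complex.neg_re,
      Complex.neg_im, _root_.map_one, Complex.one_re, Complex.one_im]
    ring
  linarith

lemma F2_psd_rankOne (hφ₂ : IsPosMap ⇑φ₂)
    (hpos : IsPosMap (merging φ₁ φ₂ B₁ C₁ B₂ C₂ ω₁ ω₂ P₁ P₂)) (η : Fin k₂ → ℂ) :
    (φ₂ (rankOne η) - (B₂ * rankOne η * B₂ᴴ + C₂ * (rankOne η)ᵀ * C₂ᴴ)).PosSemidef := by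
  rw [transpose_rankOne, mul_rankOne_conjTranspose, mul_rankOne_conjTranspose]
  rw [Matrix.posSemidef_iff_dotProduct_mulVec]
  constructor
  · exact ((hφ₂ _ (rankOne_posSemidef η)).1).sub
      ((rankOne_posSemidef _).1.add (rankOne_posSemidef _).1)
  · intro x
    rw [sub_mulVec, add_mulVec, dotProduct_sub, dotProduct_add, quadform_rankOne,
      quadform_rankOne, Complex.mul_conj, Complex.mul_conj]
    have hk := key2 φ₁ φ₂ B₁ C₁ B₂ C₂ ω₁ ω₂ P₁ P₂ hpos η x
    have hm0 : (0:ℂ) ≤ star x ⬝ᵥ (φ₂ (rankOne η)) *ᵥ x := (hφ₂ _ (rankOne_posSemidef η)).dotProduct_mulVec_nonneg x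
    rw [nonneg_complex_iff] at hm0 ⊢
    constructor
    · simp only [Complex.sub_re, Complex.add_re, Complex.ofReal_re]
      linarith
    · simp only [Complex.sub_im, Complex.add_im, Complex.ofReal_im, hm0.2]
      ring

lemma F2_posmap (hφ₂ : IsPosMap ⇑φ₂)
    (hpos : IsPosMap (merging φ₁ φ₂ B₁ C₁ B₂ C₂ ω₁ ω₂ P₁ P₂)) :
    IsPosMap (fun X : Matrix (Fin k₂) (Fin k₂) ℂ =>
      φ₂ X - (B₂ * X * B₂ᴴ + C₂ * Xᵀ * C₂ᴴ)) := by
  intro X hX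
  obtain ⟨v, hv⟩ := posSemidef_eq_sum_rankOne hX
  have hrw : φ₂ X - (B₂ * X * B₂ᴴ + C₂ * Xᵀ * C₂ᴴ)
      = ∑ j, (φ₂ (rankOne (v j))
          - (B₂ * rankOne (v j) * B₂ᴴ + C₂ * (rankOne (v j))ᵀ * C₂ᴴ)) := by
    rw [hv, map_sum, Matrix.transpose_sum, Matrix.mul_sum, Matrix.mul_sum, Matrix.sum_mul,
      Matrix.sum_mul, ← Finset.sum_add_distrib, ← Finset.sum_sub_distrib]
  dsimp only
  rw [hrw]
  exact posSemidef_sum _ _ fun j _ =>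
    F2_psd_rankOne φ₁ φ₂ B₁ C₁ B₂ C₂ ω₁ ω₂ P₁ P₂ hφ₂ hpos (v j)

end MergingSide2


section RangeLemmas

lemma proj_absorb {h : ℕ} {A P : Matrix (Fin h) (Fin h) ℂ} (hA : A.IsHermitian)
    (hP : IsOrthProjOnRange P A) : P * A = A ∧ A * P = A := by
  obtain ⟨hPh, hPP, hr⟩ := hP
  have h1 : P * A = A := by
    ext i j
    have hcol : A *ᵥ Pi.single j 1 ∈ LinearMap.range P.mulVecLin := by
      rw [hr]; exact ⟨Pi.single j 1, rfl⟩
    obtain ⟨u, hu⟩ := hcol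
    rw [Matrix.mulVecLin_apply] at hu
    have hv : (P * A) *ᵥ Pi.single j 1 = A *ᵥ Pi.single j 1 := by
      rw [← Matrix.mulVec_mulVec, ← hu, Matrix.mulVec_mulVec, hPP]
    have h2 := congrFun hv i
    simpa [Matrix.mulVec_single] using h2
  have h2 : A * P = A := by
    have h3 := congrArg Matrix.conjTranspose h1
    rwa [Matrix.conjTranspose_mul, hPh, hA] at h3
  exact ⟨h1, h2⟩

lemma range_incl_of_vanish {k h : ℕ} {A P : Matrix (Fin h) (Fin h) ℂ}
    (B : Matrix (Fin h) (Fin k) ℂ) (hA : A.PosSemidef) (hP : IsOrthProjOnRange P A)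
    (hvan : ∀ (η : Fin k → ℂ) (y : Fin h → ℂ), A *ᵥ y = 0 → star y ⬝ᵥ B *ᵥ η = 0) :
    LinearMap.range B.mulVecLin ≤ LinearMap.range A.mulVecLin := by
  obtain ⟨-, habs2⟩ := proj_absorb hA.1 hP
  have hPh := hP.1
  have hsym : ∀ l i : Fin h, (starRingEnd ℂ) (P l i) = P i l := fun l i => by
    have h3 := congrFun (congrFun hPh i) l
    simpa [Matrix.conjTranspose_apply, RCLike.star_def] using h3
  have hBP : P * B = B := by
    ext i j
    have hy : A *ᵥ ((Pi.single i 1 : Fin h → ℂ) - P *ᵥ Pi.single i 1) = 0 := by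
      have h4 := A.mulVecLin.map_sub (Pi.single i 1) (P *ᵥ Pi.single i 1)
      simp only [Matrix.mulVecLin_apply] at h4
      rw [h4, Matrix.mulVec_mulVec, habs2, sub_self]
    have ha := hvan (Pi.single j 1) _ hy
    have expand : star ((Pi.single i 1 : Fin h → ℂ) - P *ᵥ Pi.single i 1) ⬝ᵥ
        B *ᵥ (Pi.single j 1 : Fin k → ℂ) = B i j - (P * B) i j := by
      rw [star_sub, sub_dotProduct]
      congr 1
      · simp [Matrix.mulVec_single, dotProduct, Pi.single_apply, apply_ite,
          Finset.sum_ite_eq']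
      · simp only [Matrix.mulVec_single, mul_one, dotProduct, Pi.star_apply,
          RCLike.star_def, Matrix.mul_apply]
        exact Finset.sum_congr rfl fun l _ => by simp [hsym]
    rw [expand] at ha
    exact (sub_eq_zero.mp ha).symm
  intro x hx
  obtain ⟨v, hv⟩ := hx
  rw [Matrix.mulVecLin_apply] at hv
  rw [← hP.2.2]
  refine ⟨B *ᵥ v, ?_⟩
  rw [Matrix.mulVecLin_apply]
  calc P *ᵥ (B *ᵥ v) = (P * B) *ᵥ v := by rw [Matrix.mulVec_mulVec]
    _ = B *ᵥ v := by rw [hBP]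
    _ = x := hv

end RangeLemmas

/-- If the merging of positive maps `φ₁`, `φ₂` by means of
`Bᵢ, Cᵢ, ωᵢ` is positive, then `φᵢ − (ψᵢ + χᵢ)` is positive, where
`ψᵢ(X) = BᵢXBᵢ*` and `χᵢ(X) = CᵢXᵀCᵢ*`, and the ranges of `Bᵢ` and `Cᵢ` are
contained in the range of `φᵢ(1)`. -/
theorem statement1 {k₁ k₂ h₁ h₂ : ℕ}
    (φ₁ : Matrix (Fin k₁) (Fin k₁) ℂ →ₗ[ℂ] Matrix (Fin h₁) (Fin h₁) ℂ)
    (φ₂ : Matrix (Fin k₂) (Fin k₂) ℂ →ₗ[ℂ] Matrix (Fin h₂) (Fin h₂) ℂ)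
    (hφ₁ : IsPosMap ⇑φ₁) (hφ₂ : IsPosMap ⇑φ₂)
    (B₁ C₁ : Matrix (Fin h₁) (Fin k₁) ℂ) (B₂ C₂ : Matrix (Fin h₂) (Fin k₂) ℂ)
    (ω₁ : Matrix (Fin k₁) (Fin k₁) ℂ →ₗ[ℂ] ℂ) (ω₂ : Matrix (Fin k₂) (Fin k₂) ℂ →ₗ[ℂ] ℂ)
    (P₁ : Matrix (Fin h₁) (Fin h₁) ℂ) (P₂ : Matrix (Fin h₂) (Fin h₂) ℂ)
    (hP₁ : IsOrthProjOnRange P₁ (φ₁ 1)) (hP₂ : IsOrthProjOnRange P₂ (φ₂ 1))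
    (hpos : IsPosMap (merging φ₁ φ₂ B₁ C₁ B₂ C₂ ω₁ ω₂ P₁ P₂)) :
    (IsPosMap (fun X : Matrix (Fin k₁) (Fin k₁) ℂ =>
        φ₁ X - (B₁ * X * B₁ᴴ + C₁ * Xᵀ * C₁ᴴ)) ∧
      IsPosMap (fun X : Matrix (Fin k₂) (Fin k₂) ℂ =>
        φ₂ X - (B₂ * X * B₂ᴴ + C₂ * Xᵀ * C₂ᴴ))) ∧
    ((LinearMap.range B₁.mulVecLin ≤ LinearMap.range (φ₁ 1).mulVecLin ∧
        LinearMap.range C₁.mulVecLin ≤ LinearMap.range (φ₁ 1).mulVecLin) ∧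
      (LinearMap.range B₂.mulVecLin ≤ LinearMap.range (φ₂ 1).mulVecLin ∧
        LinearMap.range C₂.mulVecLin ≤ LinearMap.range (φ₂ 1).mulVecLin)) := by
  have hpsd₁ : (φ₁ 1).PosSemidef := hφ₁ 1 Matrix.PosSemidef.one
  have hpsd₂ : (φ₂ 1).PosSemidef := hφ₂ 1 Matrix.PosSemidef.one
  refine ⟨⟨F1_posmap φ₁ φ₂ B₁ C₁ B₂ C₂ ω₁ ω₂ P₁ P₂ hφ₁ hpos,
          F2_posmap φ₁ φ₂ B₁ C₁ B₂ C₂ ω₁ ω₂ P₁ P₂ hφ₂ hpos⟩,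
         ⟨⟨?_, ?_⟩, ⟨?_, ?_⟩⟩⟩
  · refine range_incl_of_vanish B₁ hpsd₁ hP₁ fun η y hy => ?_
    have hm := quad_eq_zero φ₁ hφ₁ η hy
    have hk := key1 φ₁ φ₂ B₁ C₁ B₂ C₂ ω₁ ω₂ P₁ P₂ hpos η y
    rw [hm] at hk
    simp only [Complex.zero_re] at hk
    have h0 : Complex.normSq (star y ⬝ᵥ B₁ *ᵥ η) = 0 :=
      le_antisymm (by linarith [Complex.normSq_nonneg (star y ⬝ᵥ C₁ *ᵥ star η)])
        (Complex.normSq_nonneg _)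
    exact Complex.normSq_eq_zero.mp h0
  · refine range_incl_of_vanish C₁ hpsd₁ hP₁ fun η y hy => ?_
    have hm := quad_eq_zero φ₁ hφ₁ (star η) hy
    have hk := key1 φ₁ φ₂ B₁ C₁ B₂ C₂ ω₁ ω₂ P₁ P₂ hpos (star η) y
    rw [hm] at hk
    simp only [Complex.zero_re, star_star] at hk
    have h0 : Complex.normSq (star y ⬝ᵥ C₁ *ᵥ η) = 0 :=
      le_antisymm (by linarith [Complex.normSq_nonneg (star y ⬝ᵥ B₁ *ᵥ star η)])
        (Complex.normSq_nonneg _)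
    exact Complex.normSq_eq_zero.mp h0
  · refine range_incl_of_vanish B₂ hpsd₂ hP₂ fun η y hy => ?_
    have hm := quad_eq_zero φ₂ hφ₂ η hy
    have hk := key2 φ₁ φ₂ B₁ C₁ B₂ C₂ ω₁ ω₂ P₁ P₂ hpos η y
    rw [hm] at hk
    simp only [Complex.zero_re] at hk
    have h0 : Complex.normSq (star y ⬝ᵥ B₂ *ᵥ η) = 0 :=
      le_antisymm (by linarith [Complex.normSq_nonneg (star y ⬝ᵥ C₂ *ᵥ star η)])
        (Complex.normSq_nonneg _)
    exact Complex.normSq_eq_zero.mp h0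
  · refine range_incl_of_vanish C₂ hpsd₂ hP₂ fun η y hy => ?_
    have hm := quad_eq_zero φ₂ hφ₂ (star η) hy
    have hk := key2 φ₁ φ₂ B₁ C₁ B₂ C₂ ω₁ ω₂ P₁ P₂ hpos (star η) y
    rw [hm] at hk
    simp only [Complex.zero_re, star_star] at hk
    have h0 : Complex.normSq (star y ⬝ᵥ C₂ *ᵥ η) = 0 :=
      le_antisymm (by linarith [Complex.normSq_nonneg (star y ⬝ᵥ B₂ *ᵥ star η)])
        (Complex.normSq_nonneg _)
    exact Complex.normSq_eq_zero.mp h0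

end Paper
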